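/- For every r ∈ ℕ there exists a constant C > 0, depending only on r, such that for every lift H of an orientation-preserving C^∞ circle diffeomorphism and all real numbers α, β: d_r(H ∘ R_α ∘ H^{−1}, H ∘ R_β ∘ H^{−1}) ≤ C · |H|_{r+1}^{r+1} · |α − β|. -/

import Mathlib

noncomputable section
open MeasureTheory Filter Topology

/-- A lift of an orientation-preserving `C^∞` circle diffeomorphism: a `C^∞` map
`f : ℝ → ℝ` with `f (x+1) = f x + 1` and everywhere positive derivative. -/
def IsCircleDiffeoLift (f : ℝ → ℝ) : Prop :=
  ContDiff ℝ (⊤ : ℕ∞) f ∧ (∀ x : ℝ, f (x + 1) = f x + 1) ∧ ∀ x : ℝ, 0 < deriv f x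

/-- The `C^r` norm `‖φ‖_r = max_{0 ≤ i ≤ r} sup_x |φ^{(i)}(x)|`. -/
def CrNorm (r : ℕ) (φ : ℝ → ℝ) : ℝ :=
  (Finset.range (r + 1)).sup' (Finset.nonempty_range_iff.mpr r.succ_ne_zero)
    fun i => ⨆ x : ℝ, |iteratedDeriv i φ x|

/-- `d_r(f, g) = max {‖f - g‖_r, ‖f⁻¹ - g⁻¹‖_r}`. -/
def liftDist (r : ℕ) (f g : ℝ → ℝ) : ℝ :=
  max (CrNorm r (fun x => f x - g x))
    (CrNorm r (fun x => Function.invFun f x - Function.invFun g x))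

/-- `|f|_r = max {‖f - id‖_r, ‖f⁻¹ - id‖_r, 1}`. -/
def liftNorm (r : ℕ) (f : ℝ → ℝ) : ℝ :=
  max (max (CrNorm r (fun x => f x - x)) (CrNorm r (fun x => Function.invFun f x - x))) 1

/-- The lift `x ↦ x + a` of the rotation by `a`. -/
def RotLift (a : ℝ) : ℝ → ℝ := fun x => x + a

/-- The rotation number of the circle diffeomorphism induced by the lift `f` equals `a`
(mod 1): the translation number `lim (fⁿ(0) - 0)/n` equals `a + k` for some integer `k`. -/
def HasRotationNumber (f : ℝ → ℝ) (a : ℝ) : Prop :=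
  ∃ k : ℤ, Tendsto (fun n : ℕ => f^[n] 0 / (n : ℝ)) atTop (nhds (a + k))

/-- The lift of the `i`-th iterate (`i ∈ ℤ`) of the circle diffeomorphism induced by `f`. -/
def zpowLift (f : ℝ → ℝ) : ℤ → ℝ → ℝ := fun i =>
  if 0 ≤ i then f^[i.toNat] else (Function.invFun f)^[(-i).toNat]

/-- The ratio set of a circle diffeomorphism, described through the family `Fz i` of its
iterates (`i ∈ ℤ`) and the family `D i` of the derivatives of its iterates: `t ≥ 0` lies in
the ratio set iff for every Borel `A` of positive Haar measure and every `ε > 0` there are a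
Borel `B ⊆ A` of positive measure and `i ∈ ℤ` with `Fz i '' B ⊆ A` and `|D i x - t| < ε`
on `B`. -/
def ratioSet (Fz : ℤ → UnitAddCircle → UnitAddCircle) (D : ℤ → UnitAddCircle → ℝ) : Set ℝ :=
  {t : ℝ | 0 ≤ t ∧ ∀ A : Set UnitAddCircle, MeasurableSet A → 0 < volume A →
    ∀ ε : ℝ, 0 < ε → ∃ B : Set UnitAddCircle, MeasurableSet B ∧ B ⊆ A ∧ 0 < volume B ∧
      ∃ i : ℤ, Fz i '' B ⊆ A ∧ ∀ x ∈ B, |D i x - t| < ε}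

/-- A lift of an orientation-preserving `C¹` circle diffeomorphism. -/
def IsC1CircleLift (f : ℝ → ℝ) : Prop :=
  ContDiff ℝ 1 f ∧ (∀ x : ℝ, f (x + 1) = f x + 1) ∧ ∀ x : ℝ, 0 < deriv f x




lemma periodic_iteratedDeriv {f : ℝ → ℝ} (hf : Function.Periodic f 1) (n : ℕ) :
    Function.Periodic (iteratedDeriv n f) 1 := by
  intro x
  calc iteratedDeriv n f (x + 1) = iteratedDeriv n (fun z => f (z + 1)) x :=
        (congrFun (iteratedDeriv_comp_add_const n f 1) x).symm
    _ = iteratedDeriv n f x := by congr 1; funext z; exact hf z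

lemma bddAbove_abs_of_periodic {g : ℝ → ℝ} (hc : Continuous g) (hp : Function.Periodic g 1) :
    BddAbove (Set.range fun x => |g x|) := by
  obtain ⟨M, hM⟩ := (isCompact_Icc (a := (0:ℝ)) (b := 1)).exists_bound_of_continuousOn
    hc.continuousOn
  refine ⟨M, ?_⟩
  rintro y ⟨x, rfl⟩
  have h1 : g (x - (⌊x⌋ : ℝ)) = g x := by
    have h3 := hp.sub_zsmul_eq (x := x) ⌊x⌋
    rwa [zsmul_eq_mul, mul_one] at h3
  show |g x| ≤ M
  rw [← h1]
  have hmem : x - (⌊x⌋ : ℝ) ∈ Set.Icc (0:ℝ) 1 := by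
    constructor
    · linarith [Int.floor_le x]
    · linarith [Int.lt_floor_add_one x]
  simpa [Real.norm_eq_abs] using hM _ hmem

lemma abs_iteratedDeriv_le_crNorm {g : ℝ → ℝ} (hg : ContDiff ℝ (⊤ : ℕ∞) g)
    (hp : Function.Periodic g 1) {i r : ℕ} (hi : i ≤ r) (x : ℝ) :
    |iteratedDeriv i g x| ≤ CrNorm r g := by
  have hcont : Continuous (iteratedDeriv i g) := by
    rw [iteratedDeriv_eq_iterate]; exact (hg.iterate_deriv i).continuous
  have h1 : |iteratedDeriv i g x| ≤ ⨆ y, |iteratedDeriv i g y| :=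
    le_ciSup (bddAbove_abs_of_periodic hcont (periodic_iteratedDeriv hp i)) x
  refine h1.trans ?_
  unfold CrNorm
  exact Finset.le_sup' (fun j => ⨆ y : ℝ, |iteratedDeriv j g y|) (Finset.mem_range.mpr (Nat.lt_succ_of_le hi))

lemma crNorm_le {g : ℝ → ℝ} {K : ℝ} {r : ℕ} (h : ∀ i ≤ r, ∀ x, |iteratedDeriv i g x| ≤ K) :
    CrNorm r g ≤ K := by
  unfold CrNorm
  refine Finset.sup'_le _ _ fun i hi => ?_
  exact ciSup_le fun x => h i (Nat.lt_succ_iff.mp (Finset.mem_range.mp hi)) x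

lemma iteratedDeriv_add' {n : ℕ} {f g : ℝ → ℝ} (hf : ContDiff ℝ n f) (hg : ContDiff ℝ n g)
    (x : ℝ) :
    iteratedDeriv n (fun y => f y + g y) x = iteratedDeriv n f x + iteratedDeriv n g x := by
  simp only [iteratedDeriv_eq_iteratedFDeriv]
  rw [iteratedFDeriv_add_apply' hf.contDiffAt hg.contDiffAt]
  rfl

lemma iteratedDeriv_sub' {n : ℕ} {f g : ℝ → ℝ} (hf : ContDiff ℝ n f) (hg : ContDiff ℝ n g)
    (x : ℝ) :
    iteratedDeriv n (fun y => f y - g y) x = iteratedDeriv n f x - iteratedDeriv n g x := by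
  have h : (fun y => f y - g y) = fun y => f y + -(g y) := by funext y; ring
  rw [h, iteratedDeriv_add' hf hg.neg x, iteratedDeriv_fun_neg, ← sub_eq_add_neg]

lemma abs_iteratedDeriv_id_le {j : ℕ} (hj : 1 ≤ j) (x : ℝ) :
    |iteratedDeriv j (fun y : ℝ => y) x| ≤ 1 := by
  match j, hj with
  | 1, _ => simp [iteratedDeriv_one]
  | (k+2), _ =>
    have h0 : iteratedDeriv (k+2) (fun y : ℝ => y) x = 0 := by
      rw [iteratedDeriv_succ', deriv_id'']
      rw [iteratedDeriv_eq_iteratedFDeriv, iteratedFDeriv_const_of_ne (Nat.succ_ne_zero k)]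
      rfl
    simp [h0]


lemma lift_strictMono {H : ℝ → ℝ} (hH : IsCircleDiffeoLift H) : StrictMono H :=
  strictMono_of_deriv_pos hH.2.2

lemma lift_surjective {H : ℝ → ℝ} (hH : IsCircleDiffeoLift H) : Function.Surjective H := by
  obtain ⟨hs, hl, -⟩ := hH
  have hadd : ∀ (n : ℕ) (x : ℝ), H (x + n) = H x + n := by
    intro n
    induction n with
    | zero => simp
    | succ n ih =>
      intro x
      have : x + (n + 1 : ℕ) = (x + n) + 1 := by push_cast; ring
      rw [this, hl, ih]
      push_cast; ring
  intro y
  obtain ⟨n, hn⟩ := exists_nat_ge (|y - H 0|)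
  have h1 : H (0 - (n:ℝ)) = H 0 - n := by
    have := hadd n (0 - n)
    have h2 : (0:ℝ) - n + n = 0 := by ring
    rw [h2] at this
    linarith
  have h2 : H (0 + (n:ℝ)) = H 0 + n := by
    have := hadd n 0; rw [this]
  have hle : (0:ℝ) - n ≤ 0 + n := by
    have : (0:ℝ) ≤ n := n.cast_nonneg
    linarith
  have hmem : y ∈ Set.Icc (H (0 - (n:ℝ))) (H (0 + (n:ℝ))) := by
    rw [h1, h2]
    constructor
    · have h3 := neg_le_of_abs_le hn
      linarith
    · have h3 := le_of_abs_le hn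
      linarith
  obtain ⟨x, -, hx⟩ := intermediate_value_Icc hle hs.continuous.continuousOn hmem
  exact ⟨x, hx⟩

lemma lift_invFun_rightInv {H : ℝ → ℝ} (hH : IsCircleDiffeoLift H) (x : ℝ) :
    H (Function.invFun H x) = x :=
  Function.rightInverse_invFun (lift_surjective hH) x

lemma lift_invFun_leftInv {H : ℝ → ℝ} (hH : IsCircleDiffeoLift H) (x : ℝ) :
    Function.invFun H (H x) = x :=
  Function.leftInverse_invFun (lift_strictMono hH).injective x

lemma lift_invFun_lift {H : ℝ → ℝ} (hH : IsCircleDiffeoLift H) (x : ℝ) :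
    Function.invFun H (x + 1) = Function.invFun H x + 1 := by
  apply (lift_strictMono hH).injective
  rw [lift_invFun_rightInv hH, hH.2.1, lift_invFun_rightInv hH]

lemma lift_invFun_contDiff {H : ℝ → ℝ} (hH : IsCircleDiffeoLift H) :
    ContDiff ℝ (⊤ : ℕ∞) (Function.invFun H) := by
  obtain ⟨hs, hl, hd⟩ := hH
  have hinj : Function.Injective H := (lift_strictMono ⟨hs, hl, hd⟩).injective
  rw [contDiff_iff_contDiffAt]
  intro y
  obtain ⟨x, rfl⟩ := lift_surjective ⟨hs, hl, hd⟩ y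
  have hdiff : DifferentiableAt ℝ H x := hs.differentiable (by simp) |>.differentiableAt
  set u : ℝˣ := Units.mk0 (deriv H x) (ne_of_gt (hd x)) with hu
  set e : ℝ ≃L[ℝ] ℝ := ContinuousLinearEquiv.unitsEquivAut ℝ u with he
  have hfd : HasFDerivAt H (↑e : ℝ →L[ℝ] ℝ) x := hdiff.hasDerivAt.hasFDerivAt
  have hca : ContDiffAt ℝ (⊤ : ℕ∞) H x := hs.contDiffAt
  have h1 : (1 : WithTop ℕ∞) ≤ ((⊤ : ℕ∞) : WithTop ℕ∞) := by exact_mod_cast (le_top : (1:ℕ∞) ≤ ⊤)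
  have hloc := hca.to_localInverse (f' := e) hfd (by simp)
  have hstrict := hca.hasStrictFDerivAt' (f' := e) hfd (by simp)
  have huniq := hstrict.localInverse_unique (g := Function.invFun H)
    (Filter.Eventually.of_forall fun z => Function.leftInverse_invFun hinj z)
  exact hloc.congr_of_eventuallyEq huniq


lemma mvt_bound {H : ℝ → ℝ} (hs : ContDiff ℝ (⊤ : ℕ∞) H) {i : ℕ} {K : ℝ}
    (hK : ∀ x, |iteratedDeriv (i+1) H x| ≤ K) (u v : ℝ) :
    |iteratedDeriv i H u - iteratedDeriv i H v| ≤ K * |u - v| := by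
  have hct : ContDiff ℝ (⊤ : ℕ∞) (iteratedDeriv i H) := by
    rw [iteratedDeriv_eq_iterate]; exact hs.iterate_deriv i
  have hdiff : ∀ z ∈ Set.univ, DifferentiableAt ℝ (iteratedDeriv i H) z := fun z _ =>
    hct.differentiable (by simp) z
  have hbound : ∀ z ∈ Set.univ, ‖deriv (iteratedDeriv i H) z‖ ≤ K := by
    intro z _
    rw [← iteratedDeriv_succ]
    simpa [Real.norm_eq_abs] using hK z
  have := convex_univ.norm_image_sub_le_of_norm_deriv_le hdiff hbound
    (Set.mem_univ v) (Set.mem_univ u)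
  simpa [Real.norm_eq_abs] using this

lemma lift_deriv_bound {F : ℝ → ℝ} (hF : ContDiff ℝ (⊤ : ℕ∞) F)
    (hper : ∀ x, F (x + 1) = F x + 1) {R : ℕ} {M : ℝ}
    (hM : CrNorm R (fun x => F x - x) ≤ M) (hM1 : 1 ≤ M) :
    ∀ j, 1 ≤ j → j ≤ R → ∀ x, |iteratedDeriv j F x| ≤ 2 * M := by
  intro j hj1 hjR x
  have hg : ContDiff ℝ (⊤ : ℕ∞) (fun y => F y - y) := hF.sub contDiff_id
  have hgp : Function.Periodic (fun y => F y - y) 1 := by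
    intro y; simp only [hper y]; ring
  have hFeq : F = fun y => (F y - y) + y := by funext y; ring
  have hsplit : iteratedDeriv j F x
      = iteratedDeriv j (fun y => F y - y) x + iteratedDeriv j (fun y : ℝ => y) x := by
    conv_lhs => rw [hFeq]
    exact iteratedDeriv_add' (hg.of_le (by exact_mod_cast le_top))
      (contDiff_id.of_le (by exact_mod_cast le_top)) x
  rw [hsplit]
  have h1 : |iteratedDeriv j (fun y => F y - y) x| ≤ M :=
    (abs_iteratedDeriv_le_crNorm hg hgp hjR x).trans hM
  have h2 := abs_iteratedDeriv_id_le hj1 x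
  calc |iteratedDeriv j (fun y => F y - y) x + iteratedDeriv j (fun y : ℝ => y) x|
      ≤ |iteratedDeriv j (fun y => F y - y) x| + |iteratedDeriv j (fun y : ℝ => y) x| :=
        abs_add_le _ _
    _ ≤ M + 1 := add_le_add h1 h2
    _ ≤ 2 * M := by linarith

lemma main_bound (r : ℕ) {H : ℝ → ℝ} (hH : IsCircleDiffeoLift H) (c d : ℝ) :
    CrNorm r (fun x => H (Function.invFun H x + c) - H (Function.invFun H x + d))
      ≤ (r.factorial : ℝ) * 2 ^ (r+1) * liftNorm (r+1) H ^ (r+1) * |c - d| := by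
  obtain ⟨hs, hl, hd⟩ := hH
  set ψ := Function.invFun H with hψ
  have hψsm : ContDiff ℝ (⊤ : ℕ∞) ψ := lift_invFun_contDiff ⟨hs, hl, hd⟩
  have hψl : ∀ x, ψ (x + 1) = ψ x + 1 := lift_invFun_lift ⟨hs, hl, hd⟩
  set L := liftNorm (r+1) H with hL
  have hL1 : (1:ℝ) ≤ L := le_max_right _ 1
  have hHM : CrNorm (r+1) (fun x => H x - x) ≤ L := le_trans (le_max_left _ _) (le_max_left _ _)
  have hψM : CrNorm (r+1) (fun x => ψ x - x) ≤ L := le_trans (le_max_right _ _) (le_max_left _ _)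
  have hHb := lift_deriv_bound hs hl hHM hL1
  have hψb := lift_deriv_bound hψsm hψl hψM hL1
  set G : ℝ → ℝ := fun y => H (y + c) - H (y + d) with hG
  have hGsm : ContDiff ℝ (⊤ : ℕ∞) G :=
    (hs.comp (contDiff_id.add contDiff_const)).sub (hs.comp (contDiff_id.add contDiff_const))
  have hGd : ∀ i ≤ r, ∀ y, |iteratedDeriv i G y| ≤ (2*L) * |c - d| := by
    intro i hi y
    have e1 : ∀ t : ℝ, iteratedDeriv i (fun z => H (z + t)) y = iteratedDeriv i H (y + t) :=
      fun t => congrFun (iteratedDeriv_comp_add_const i H t) y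
    have hsm : ∀ t : ℝ, ContDiff ℝ (i : ℕ) (fun z : ℝ => H (z + t)) := fun t =>
      (hs.of_le (by exact_mod_cast le_top)).comp (contDiff_id.add contDiff_const)
    have e2 : iteratedDeriv i G y = iteratedDeriv i H (y + c) - iteratedDeriv i H (y + d) := by
      rw [hG, iteratedDeriv_sub' (hsm c) (hsm d) y, e1, e1]
    rw [e2]
    have hK : ∀ x, |iteratedDeriv (i+1) H x| ≤ 2*L := fun x =>
      hHb (i+1) (by omega) (by omega) x
    have := mvt_bound hs hK (y + c) (y + d)
    simpa [add_sub_add_left_eq_sub] using this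
  apply crNorm_le
  intro i hi x
  have hn : (i : WithTop ℕ∞) ≤ ((⊤ : ℕ∞) : WithTop ℕ∞) := by
    exact_mod_cast (le_top : (i : ℕ∞) ≤ ⊤)
  have hC : ∀ i', i' ≤ i → ‖iteratedFDeriv ℝ i' G (ψ x)‖ ≤ (2*L) * |c - d| := by
    intro i' hi'
    rw [norm_iteratedFDeriv_eq_norm_iteratedDeriv, Real.norm_eq_abs]
    exact hGd i' (hi'.trans hi) (ψ x)
  have hD : ∀ i', 1 ≤ i' → i' ≤ i → ‖iteratedFDeriv ℝ i' ψ x‖ ≤ (2*L) ^ i' := by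
    intro i' h1 h2
    rw [norm_iteratedFDeriv_eq_norm_iteratedDeriv, Real.norm_eq_abs]
    refine (hψb i' h1 (by omega) x).trans ?_
    calc 2*L = (2*L) ^ 1 := (pow_one _).symm
      _ ≤ (2*L) ^ i' := pow_le_pow_right₀ (by linarith) h1
  have hcomp := norm_iteratedFDeriv_comp_le hGsm hψsm hn x hC hD
  have heq : |iteratedDeriv i (fun x => H (ψ x + c) - H (ψ x + d)) x|
      = ‖iteratedFDeriv ℝ i (G ∘ ψ) x‖ := by
    rw [norm_iteratedFDeriv_eq_norm_iteratedDeriv, Real.norm_eq_abs]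
    rfl
  rw [heq]
  refine hcomp.trans ?_
  have h2L : (1:ℝ) ≤ 2*L := by linarith
  have e3 : (i.factorial : ℝ) * ((2*L) * |c - d|) * (2*L) ^ i
      = (i.factorial : ℝ) * (2*L) ^ (i+1) * |c - d| := by ring
  have e4 : (r.factorial : ℝ) * 2 ^ (r+1) * L ^ (r+1) * |c - d|
      = (r.factorial : ℝ) * (2*L) ^ (r+1) * |c - d| := by rw [mul_pow]; ring
  rw [e3, e4]
  have hfac : (i.factorial : ℝ) ≤ (r.factorial : ℝ) := by
    exact_mod_cast Nat.factorial_le hi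
  have hpow : (2*L) ^ (i+1) ≤ (2*L) ^ (r+1) := pow_le_pow_right₀ h2L (by omega)
  have hmul : (i.factorial : ℝ) * (2*L) ^ (i+1) ≤ (r.factorial : ℝ) * (2*L) ^ (r+1) :=
    mul_le_mul hfac hpow (pow_nonneg (by linarith) _) (Nat.cast_nonneg _)
  exact mul_le_mul_of_nonneg_right hmul (abs_nonneg _)


/-- For every `r` there is `C = C(r) > 0` such that for every lift `H` of an
orientation-preserving smooth circle diffeomorphism and all `α, β ∈ ℝ`,
`d_r(H R_α H⁻¹, H R_β H⁻¹) ≤ C |H|_{r+1}^{r+1} |α - β|`. -/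
theorem stmt_12 (r : ℕ) :
    ∃ C : ℝ, 0 < C ∧ ∀ H : ℝ → ℝ, IsCircleDiffeoLift H → ∀ a b : ℝ,
      liftDist r (H ∘ RotLift a ∘ Function.invFun H) (H ∘ RotLift b ∘ Function.invFun H) ≤
        C * liftNorm (r + 1) H ^ (r + 1) * |a - b| := by
  refine ⟨(r.factorial : ℝ) * 2 ^ (r+1), by positivity, ?_⟩
  intro H hH a b
  have hinj : Function.Injective H := (lift_strictMono hH).injective
  set ψ := Function.invFun H with hψ
  have hHψ : ∀ x, H (ψ x) = x := lift_invFun_rightInv hH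
  have hψH : ∀ x, ψ (H x) = x := lift_invFun_leftInv hH
  have hψinj : Function.Injective ψ := fun x y h => by rw [← hHψ x, ← hHψ y, h]
  have hinvconj : ∀ c : ℝ, Function.invFun (H ∘ RotLift c ∘ ψ) = fun x => H (ψ x + -c) := by
    intro c
    funext x
    have hfinj : Function.Injective (H ∘ RotLift c ∘ ψ) := by
      apply hinj.comp
      refine Function.Injective.comp ?_ hψinj
      intro u v huv
      simpa [RotLift] using huv
    have hval : (H ∘ RotLift c ∘ ψ) (H (ψ x + -c)) = x := by
      simp only [Function.comp_apply, RotLift]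
      rw [hψH, show ψ x + -c + c = ψ x by ring, hHψ]
    apply hfinj
    rw [Function.invFun_eq ⟨H (ψ x + -c), hval⟩, hval]
  unfold liftDist
  apply max_le
  · exact main_bound r hH a b
  · rw [hinvconj a, hinvconj b]
    have h := main_bound r hH (-a) (-b)
    rw [show (-a) - (-b) = -(a - b) by ring, abs_neg] at h
    exact h
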